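/- Let A ∈ ℝ^{n×n}, λ* ∈ ℝ, C_1 ≥ 1 with ‖e^{At}‖ ≤ C_1 e^{λ*t} for all t ≥ 0. Let (P_r)_{r∈ℕ} be matrices in ℝ^{N×N}, let 0 = t_0 < t_1 < ⋯ be real numbers with τ_r = t_{r+1} − t_r, and let 0 = j_0 < j_1 < ⋯ be indices such that for some 0 < δ < 1 and every k, ‖P_{j_{k+1}−1}⋯P_{j_k}‖ ≤ δ. Then for every positive integer ℓ and every k ≥ 0, the product of Kronecker-product factors satisfies ‖(P_{j_{k+ℓ}−1} ⊗ e^{Aτ_{j_{k+ℓ}−1}}) ⋯ (P_{j_k} ⊗ e^{Aτ_{j_k}})‖ ≤ C_1 δ^ℓ e^{λ*(t_{j_{k+ℓ}} − t_{j_k})}; in particular, if λ* ≥ 0 and t_{j_{k+1}} − t_{j_k} ≤ T_c for all k, this is at most C_1 (δ e^{λ*T_c})^ℓ. -/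

import Mathlib

open Matrix NormedSpace Kronecker

set_option synthInstance.maxHeartbeats 1000000
set_option maxHeartbeats 1000000

/-- The operator norm of a square real matrix induced by the Euclidean vector norm. -/
noncomputable def opNorm {k : Type*} [Fintype k] [DecidableEq k] (M : Matrix k k ℝ) : ℝ :=
  ‖Matrix.toEuclideanCLM (𝕜 := ℝ) M‖

/-- The product `f (b-1) * f (b-2) * ⋯ * f a` (the identity if `b ≤ a`):
later factors multiply on the left. -/
def descProd {R : Type*} [Monoid R] (f : ℕ → R) (a b : ℕ) : R :=
  ((List.range (b - a)).map (fun i => f (b - 1 - i))).prod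

/-! ### Auxiliary lemmas -/

lemma opNorm_nonneg' {k : Type*} [Fintype k] [DecidableEq k] (M : Matrix k k ℝ) :
    0 ≤ opNorm M := norm_nonneg _

lemma opNorm_one_le' {k : Type*} [Fintype k] [DecidableEq k] :
    opNorm (1 : Matrix k k ℝ) ≤ 1 := by
  rw [opNorm, _root_.map_one]; exact ContinuousLinearMap.norm_id_le

lemma opNorm_mul_le' {k : Type*} [Fintype k] [DecidableEq k] (M P : Matrix k k ℝ) :
    opNorm (M * P) ≤ opNorm M * opNorm P := by
  rw [opNorm, _root_.map_mul]; exact norm_mul_le _ _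

lemma euclid_norm_sq {ι : Type*} [Fintype ι] (y : EuclideanSpace ℝ ι) :
    ‖y‖ ^ 2 = ∑ i, (y i) ^ 2 := by
  rw [EuclideanSpace.norm_eq, Real.sq_sqrt (by positivity)]
  simp [Real.norm_eq_abs, sq_abs]

lemma toEuclideanCLM_apply' {k : Type*} [Fintype k] [DecidableEq k]
    (B : Matrix k k ℝ) (y : EuclideanSpace ℝ k) (p : k) :
    Matrix.toEuclideanCLM (𝕜 := ℝ) B y p = ∑ q, B p q * y q := rfl

lemma opNorm_kron_one_le {m n : ℕ} (M : Matrix (Fin m) (Fin m) ℝ) :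
    opNorm (M ⊗ₖ (1 : Matrix (Fin n) (Fin n) ℝ)) ≤ opNorm M := by
  rw [opNorm]
  refine ContinuousLinearMap.opNorm_le_bound _ (opNorm_nonneg' M) fun x => ?_
  set T := Matrix.toEuclideanCLM (𝕜 := ℝ) (M ⊗ₖ (1 : Matrix (Fin n) (Fin n) ℝ)) with hT
  set v : Fin n → EuclideanSpace ℝ (Fin m) :=
    fun j => (WithLp.equiv 2 _).symm (fun k => x (k, j)) with hv
  have hvapp : ∀ j k, v j k = x (k, j) := fun j k => rfl
  have hcomp : ∀ i j, (T x) (i, j) = (Matrix.toEuclideanCLM (𝕜 := ℝ) M (v j)) i := by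
    intro i j
    rw [hT, toEuclideanCLM_apply', toEuclideanCLM_apply']
    rw [Fintype.sum_prod_type]
    simp [Matrix.one_apply, mul_ite, mul_comm, hvapp]
  have h1 : ‖T x‖ ^ 2 ≤ (‖Matrix.toEuclideanCLM (𝕜 := ℝ) M‖ * ‖x‖) ^ 2 := by
    rw [euclid_norm_sq]
    calc ∑ p : Fin m × Fin n, (T x p) ^ 2
        = ∑ j, ∑ i, (T x (i, j)) ^ 2 := by
          rw [Fintype.sum_prod_type]; exact Finset.sum_comm
      _ = ∑ j, ‖Matrix.toEuclideanCLM (𝕜 := ℝ) M (v j)‖ ^ 2 := by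
          refine Finset.sum_congr rfl fun j _ => ?_
          rw [euclid_norm_sq]
          exact Finset.sum_congr rfl fun i _ => by rw [hcomp]
      _ ≤ ∑ j, (‖Matrix.toEuclideanCLM (𝕜 := ℝ) M‖ * ‖v j‖) ^ 2 := by
          refine Finset.sum_le_sum fun j _ => ?_
          exact pow_le_pow_left₀ (norm_nonneg _)
            ((Matrix.toEuclideanCLM (𝕜 := ℝ) M).le_opNorm (v j)) 2
      _ = ‖Matrix.toEuclideanCLM (𝕜 := ℝ) M‖ ^ 2 * ∑ j, ∑ k, (x (k, j)) ^ 2 := by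
          rw [Finset.mul_sum]
          refine Finset.sum_congr rfl fun j _ => ?_
          rw [mul_pow, euclid_norm_sq]
          simp [hvapp]
      _ = (‖Matrix.toEuclideanCLM (𝕜 := ℝ) M‖ * ‖x‖) ^ 2 := by
          rw [mul_pow, euclid_norm_sq]
          congr 1
          rw [Fintype.sum_prod_type]
          exact Finset.sum_comm
  have h2 := Real.sqrt_le_sqrt h1
  rwa [Real.sqrt_sq (norm_nonneg _), Real.sqrt_sq (by positivity)] at h2

lemma opNorm_one_kron_le {m n : ℕ} (Nm : Matrix (Fin n) (Fin n) ℝ) :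
    opNorm ((1 : Matrix (Fin m) (Fin m) ℝ) ⊗ₖ Nm) ≤ opNorm Nm := by
  rw [opNorm]
  refine ContinuousLinearMap.opNorm_le_bound _ (opNorm_nonneg' Nm) fun x => ?_
  set T := Matrix.toEuclideanCLM (𝕜 := ℝ) ((1 : Matrix (Fin m) (Fin m) ℝ) ⊗ₖ Nm) with hT
  set v : Fin m → EuclideanSpace ℝ (Fin n) :=
    fun i => (WithLp.equiv 2 _).symm (fun l => x (i, l)) with hv
  have hvapp : ∀ i l, v i l = x (i, l) := fun i l => rfl
  have hcomp : ∀ i j, (T x) (i, j) = (Matrix.toEuclideanCLM (𝕜 := ℝ) Nm (v i)) j := by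
    intro i j
    rw [hT, toEuclideanCLM_apply', toEuclideanCLM_apply']
    rw [Fintype.sum_prod_type]
    simp [Matrix.one_apply, ite_mul, hvapp]
  have h1 : ‖T x‖ ^ 2 ≤ (‖Matrix.toEuclideanCLM (𝕜 := ℝ) Nm‖ * ‖x‖) ^ 2 := by
    rw [euclid_norm_sq]
    calc ∑ p : Fin m × Fin n, (T x p) ^ 2
        = ∑ i, ∑ j, (T x (i, j)) ^ 2 := by rw [Fintype.sum_prod_type]
      _ = ∑ i, ‖Matrix.toEuclideanCLM (𝕜 := ℝ) Nm (v i)‖ ^ 2 := by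
          refine Finset.sum_congr rfl fun i _ => ?_
          rw [euclid_norm_sq]
          exact Finset.sum_congr rfl fun j _ => by rw [hcomp]
      _ ≤ ∑ i, (‖Matrix.toEuclideanCLM (𝕜 := ℝ) Nm‖ * ‖v i‖) ^ 2 := by
          refine Finset.sum_le_sum fun i _ => ?_
          exact pow_le_pow_left₀ (norm_nonneg _)
            ((Matrix.toEuclideanCLM (𝕜 := ℝ) Nm).le_opNorm (v i)) 2
      _ = ‖Matrix.toEuclideanCLM (𝕜 := ℝ) Nm‖ ^ 2 * ∑ i, ∑ l, (x (i, l)) ^ 2 := by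
          rw [Finset.mul_sum]
          refine Finset.sum_congr rfl fun i _ => ?_
          rw [mul_pow, euclid_norm_sq]
          simp [hvapp]
      _ = (‖Matrix.toEuclideanCLM (𝕜 := ℝ) Nm‖ * ‖x‖) ^ 2 := by
          rw [mul_pow, euclid_norm_sq]
          congr 1
          rw [Fintype.sum_prod_type]
  have h2 := Real.sqrt_le_sqrt h1
  rwa [Real.sqrt_sq (norm_nonneg _), Real.sqrt_sq (by positivity)] at h2

lemma opNorm_kron_le {m n : ℕ} (M : Matrix (Fin m) (Fin m) ℝ)
    (Nm : Matrix (Fin n) (Fin n) ℝ) :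
    opNorm (M ⊗ₖ Nm) ≤ opNorm M * opNorm Nm := by
  have h : M ⊗ₖ Nm
      = (M ⊗ₖ (1 : Matrix (Fin n) (Fin n) ℝ)) * ((1 : Matrix (Fin m) (Fin m) ℝ) ⊗ₖ Nm) := by
    rw [← Matrix.mul_kronecker_mul, Matrix.mul_one, Matrix.one_mul]
  rw [h]
  exact le_trans (opNorm_mul_le' _ _)
    (mul_le_mul (opNorm_kron_one_le M) (opNorm_one_kron_le Nm)
      (opNorm_nonneg' _) (opNorm_nonneg' _))

lemma descProd_self {R : Type*} [Monoid R] (f : ℕ → R) (a : ℕ) : descProd f a a = 1 := by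
  simp [descProd]

lemma descProd_succ {R : Type*} [Monoid R] (f : ℕ → R) (a b : ℕ) (h : a ≤ b) :
    descProd f a (b + 1) = f b * descProd f a b := by
  have h1 : b + 1 - a = (b - a) + 1 := by omega
  have h2 : ∀ i : ℕ, b + 1 - 1 - (i + 1) = b - 1 - i := fun i => by omega
  have h3 : ((fun i => f (b + 1 - 1 - i)) ∘ Nat.succ) = fun i => f (b - 1 - i) := by
    funext i; simp only [Function.comp_apply]; congr 1; omega
  have h0 : b + 1 - 1 - 0 = b := by omega
  rw [descProd, h1, List.range_succ_eq_map, List.map_cons, List.prod_cons, List.map_map,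
    h0, h3, descProd]

lemma descProd_mul {R : Type*} [Monoid R] (f : ℕ → R) {a b c : ℕ} (hab : a ≤ b) (hbc : b ≤ c) :
    descProd f b c * descProd f a b = descProd f a c := by
  induction c, hbc using Nat.le_induction with
  | base => rw [descProd_self, one_mul]
  | succ c hbc ih =>
      rw [descProd_succ f b c hbc, descProd_succ f a c (hab.trans hbc), mul_assoc, ih]

lemma descProd_kron {p q : ℕ} (P : ℕ → Matrix (Fin p) (Fin p) ℝ)
    (E : ℕ → Matrix (Fin q) (Fin q) ℝ) {a b : ℕ} (h : a ≤ b) :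
    descProd (fun r => P r ⊗ₖ E r) a b = descProd P a b ⊗ₖ descProd E a b := by
  induction b, h using Nat.le_induction with
  | base => rw [descProd_self, descProd_self, descProd_self, Matrix.one_kronecker_one]
  | succ b hab ih =>
      rw [descProd_succ _ a b hab, descProd_succ _ a b hab, descProd_succ _ a b hab, ih,
        Matrix.mul_kronecker_mul]

lemma descProd_exp {n : ℕ} (A : Matrix (Fin n) (Fin n) ℝ) (ts : ℕ → ℝ) {a b : ℕ} (h : a ≤ b) :
    descProd (fun r => exp ((ts (r + 1) - ts r) • A)) a b = exp ((ts b - ts a) • A) := by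
  induction b, h using Nat.le_induction with
  | base => rw [descProd_self, sub_self, zero_smul, exp_zero]
  | succ b hab ih =>
      rw [descProd_succ _ a b hab, ih, ← Matrix.exp_add_of_commute _ _
        (((Commute.refl A).smul_left _).smul_right _)]
      congr 1
      rw [← add_smul]
      congr 1
      ring

/-- Bound on products of Kronecker factors `P_r ⊗ e^{Aτ_r}` over `ℓ`
consecutive blocks, given `‖e^{At}‖ ≤ C₁e^{λ*t}` and block bounds
`‖P_{j_{k+1}-1}⋯P_{j_k}‖ ≤ δ`; in particular the bound `C₁(δe^{λ*T_c})^ℓ` when `λ* ≥ 0`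
and the blocks have duration at most `T_c`. -/
theorem opNorm_kron_block_prod_le
    (n N : ℕ) (A : Matrix (Fin n) (Fin n) ℝ) (lamStar C1 : ℝ) (hC1 : 1 ≤ C1)
    (hA : ∀ t : ℝ, 0 ≤ t → opNorm (exp (t • A)) ≤ C1 * Real.exp (lamStar * t))
    (P : ℕ → Matrix (Fin N) (Fin N) ℝ)
    (ts : ℕ → ℝ) (hts0 : ts 0 = 0) (htsmono : StrictMono ts)
    (j : ℕ → ℕ) (hj0 : j 0 = 0) (hjmono : StrictMono j)
    (δ : ℝ) (hδ0 : 0 < δ) (hδ1 : δ < 1)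
    (hblock : ∀ k : ℕ, opNorm (descProd P (j k) (j (k + 1))) ≤ δ) :
    ∀ ℓ : ℕ, 0 < ℓ → ∀ k : ℕ,
      (opNorm (descProd
          (fun r => P r ⊗ₖ exp ((ts (r + 1) - ts r) • A)) (j k) (j (k + ℓ))) ≤
        C1 * δ ^ ℓ * Real.exp (lamStar * (ts (j (k + ℓ)) - ts (j k)))) ∧
      (0 ≤ lamStar → ∀ Tc : ℝ, (∀ k' : ℕ, ts (j (k' + 1)) - ts (j k') ≤ Tc) →
        opNorm (descProd
          (fun r => P r ⊗ₖ exp ((ts (r + 1) - ts r) • A)) (j k) (j (k + ℓ))) ≤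
        C1 * (δ * Real.exp (lamStar * Tc)) ^ ℓ) := by
  -- block product bound
  have hQ : ∀ ℓ k, opNorm (descProd P (j k) (j (k + ℓ))) ≤ δ ^ ℓ := by
    intro ℓ
    induction ℓ with
    | zero => intro k; simpa [descProd_self] using opNorm_one_le' (k := Fin N)
    | succ ℓ ih =>
        intro k
        have hab : j k ≤ j (k + ℓ) := hjmono.monotone (Nat.le_add_right k ℓ)
        have hbc : j (k + ℓ) ≤ j (k + ℓ + 1) := (hjmono (Nat.lt_succ_self _)).le
        have hsplit := descProd_mul P hab hbc
        have : k + (ℓ + 1) = (k + ℓ) + 1 := rfl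
        rw [this, ← hsplit]
        calc opNorm (descProd P (j (k + ℓ)) (j (k + ℓ + 1)) * descProd P (j k) (j (k + ℓ)))
            ≤ opNorm (descProd P (j (k + ℓ)) (j (k + ℓ + 1)))
              * opNorm (descProd P (j k) (j (k + ℓ))) := opNorm_mul_le' _ _
          _ ≤ δ * δ ^ ℓ := mul_le_mul (hblock (k + ℓ)) (ih k)
              (opNorm_nonneg' _) hδ0.le
          _ = δ ^ (ℓ + 1) := by ring
  intro ℓ _ k
  have hab : j k ≤ j (k + ℓ) := hjmono.monotone (Nat.le_add_right k ℓ)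
  have hΔ : 0 ≤ ts (j (k + ℓ)) - ts (j k) := sub_nonneg.2 (htsmono.monotone hab)
  have hmain : opNorm (descProd
      (fun r => P r ⊗ₖ exp ((ts (r + 1) - ts r) • A)) (j k) (j (k + ℓ))) ≤
      C1 * δ ^ ℓ * Real.exp (lamStar * (ts (j (k + ℓ)) - ts (j k))) := by
    rw [descProd_kron P _ hab, descProd_exp A ts hab]
    calc opNorm (descProd P (j k) (j (k + ℓ)) ⊗ₖ exp ((ts (j (k + ℓ)) - ts (j k)) • A))
        ≤ opNorm (descProd P (j k) (j (k + ℓ)))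
          * opNorm (exp ((ts (j (k + ℓ)) - ts (j k)) • A)) := opNorm_kron_le _ _
      _ ≤ δ ^ ℓ * (C1 * Real.exp (lamStar * (ts (j (k + ℓ)) - ts (j k)))) :=
          mul_le_mul (hQ ℓ k) (hA _ hΔ) (opNorm_nonneg' _) (pow_nonneg hδ0.le ℓ)
      _ = C1 * δ ^ ℓ * Real.exp (lamStar * (ts (j (k + ℓ)) - ts (j k))) := by ring
  refine ⟨hmain, fun hlam Tc hTc => ?_⟩
  have htel : ∀ L k', ts (j (k' + L)) - ts (j k') ≤ L * Tc := by
    intro L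
    induction L with
    | zero => intro k'; simp
    | succ L ih =>
        intro k'
        have h1 := hTc (k' + L)
        have h2 := ih k'
        have h3 : k' + (L + 1) = (k' + L) + 1 := rfl
        rw [h3]
        push_cast
        nlinarith
  have hΔTc : ts (j (k + ℓ)) - ts (j k) ≤ ℓ * Tc := htel ℓ k
  refine hmain.trans ?_
  have hexp : Real.exp (lamStar * (ts (j (k + ℓ)) - ts (j k)))
      ≤ Real.exp (lamStar * Tc) ^ ℓ := by
    rw [← Real.exp_nat_mul]
    apply Real.exp_le_exp.2
    calc lamStar * (ts (j (k + ℓ)) - ts (j k)) ≤ lamStar * (ℓ * Tc) :=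
          mul_le_mul_of_nonneg_left hΔTc hlam
      _ = ℓ * (lamStar * Tc) := by ring
  calc C1 * δ ^ ℓ * Real.exp (lamStar * (ts (j (k + ℓ)) - ts (j k)))
      ≤ C1 * δ ^ ℓ * Real.exp (lamStar * Tc) ^ ℓ := by
        apply mul_le_mul_of_nonneg_left hexp
        positivity
    _ = C1 * (δ * Real.exp (lamStar * Tc)) ^ ℓ := by rw [mul_pow, mul_assoc]
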